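/- Let n ≥ 2, J ⊆ {1,…,n−1}, and d* = gcd of the set ({1,…,n} \ J) ∪ {n} (i.e., the gcd of all elements of {1,…,n} not in J, together with n). Define φ: ℤ^J → ℤ_{d*} by φ((c_j)) = Σ_{j∈J} j·c_j mod d*. Then two tuples (c_j), (d_j) ∈ {0,…,n−1}^J satisfy: there exist integers (a_r)_{r∉J} with Σ_{r∉J, r≤n−1} r·a_r ≡ −Σ_{j∈J} j(d_j − c_j) mod n, if and only if φ((c_j)) = φ((d_j)). Moreover φ is surjective onto ℤ_{d*}. -/

import Mathlib

lemma repr_iff (S : Finset ℕ) (m : ℤ) :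
    (∃ a : ℕ → ℤ, m = ∑ s ∈ S, (s : ℤ) * a s) ↔ ((S.gcd id : ℕ) : ℤ) ∣ m := by
  constructor
  · rintro ⟨a, rfl⟩
    refine Finset.dvd_sum fun s hs => Dvd.dvd.mul_right ?_ _
    exact_mod_cast Int.natCast_dvd_natCast.mpr (Finset.gcd_dvd hs)
  · induction S using Finset.induction_on generalizing m with
    | empty =>
      intro h
      simp only [Finset.gcd_empty, Nat.cast_zero, zero_dvd_iff] at h
      exact ⟨0, by simp [h]⟩
    | insert s S hs ih =>
      intro h
      rw [Finset.gcd_insert] at h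
      set G : ℕ := S.gcd id with hG
      have hgcd : gcd (id s) G = Nat.gcd s G := rfl
      obtain ⟨k, hk⟩ := h
      have hbez : (Nat.gcd s G : ℤ) = (s : ℤ) * Int.gcdA s G + (G : ℤ) * Int.gcdB s G := by
        have := Int.gcd_eq_gcd_ab (s : ℤ) (G : ℤ)
        simpa [Int.gcd_natCast_natCast] using this
      set u := Int.gcdA s G
      set v := Int.gcdB s G
      obtain ⟨b, hb⟩ := ih ((G : ℤ) * (k * v)) ⟨k * v, rfl⟩
      refine ⟨fun t => if t = s then k * u else b t, ?_⟩
      have hbeta : (fun t => if t = s then k * u else b t) s = k * u := by simp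
      rw [Finset.sum_insert hs, hbeta]
      have hcongr : ∑ t ∈ S, (t : ℤ) * (if t = s then k * u else b t)
          = ∑ t ∈ S, (t : ℤ) * b t := by
        refine Finset.sum_congr rfl fun t ht => ?_
        have htne : t ≠ s := by rintro rfl; exact hs ht
        rw [if_neg htne]
      rw [hcongr, ← hb, hk, hgcd, hbez]
      ring

theorem stmt6 (n : ℕ) (hn : 2 ≤ n) (J : Finset ℕ) (hJ : J ⊆ Finset.Icc 1 (n - 1))
    (c d : ℕ → ℤ) (hc : ∀ j ∈ J, 0 ≤ c j ∧ c j ≤ (n : ℤ) - 1)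
    (hd : ∀ j ∈ J, 0 ≤ d j ∧ d j ≤ (n : ℤ) - 1) :
    ((∃ a : ℕ → ℤ,
        (n : ℤ) ∣ ((∑ r ∈ Finset.Icc 1 (n - 1) \ J, (r : ℤ) * a r) +
          ∑ j ∈ J, (j : ℤ) * (d j - c j)))
      ↔ ((((Finset.Icc 1 n \ J).gcd id : ℕ) : ℤ) ∣
          (∑ j ∈ J, (j : ℤ) * c j - ∑ j ∈ J, (j : ℤ) * d j))) ∧
    (∀ r : ℤ, ∃ c' : ℕ → ℤ,
      ((((Finset.Icc 1 n \ J).gcd id : ℕ) : ℤ) ∣ (∑ j ∈ J, (j : ℤ) * c' j - r))) := by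
  have hnJ : n ∉ J := fun h => by have := Finset.mem_Icc.mp (hJ h); omega
  set T0 : Finset ℕ := Finset.Icc 1 (n - 1) \ J with hT0
  have hnT0 : n ∉ T0 := fun h => by
    have := Finset.mem_Icc.mp (Finset.mem_sdiff.mp h).1; omega
  have hset : Finset.Icc 1 n \ J = insert n T0 := by
    ext x
    simp only [hT0, Finset.mem_sdiff, Finset.mem_Icc, Finset.mem_insert]
    constructor
    · rintro ⟨⟨h1, h2⟩, hx⟩
      rcases eq_or_lt_of_le h2 with rfl | h2'
      · exact Or.inl rfl
      · exact Or.inr ⟨⟨h1, by omega⟩, hx⟩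
    · rintro (rfl | ⟨⟨h1, h2⟩, hx⟩)
      · exact ⟨⟨by omega, le_refl _⟩, hnJ⟩
      · exact ⟨⟨h1, by omega⟩, hx⟩
  set g : ℕ := (Finset.Icc 1 n \ J).gcd id with hg
  have hSneg : ∑ j ∈ J, (j : ℤ) * c j - ∑ j ∈ J, (j : ℤ) * d j
      = -(∑ j ∈ J, (j : ℤ) * (d j - c j)) := by
    rw [← Finset.sum_sub_distrib, ← Finset.sum_neg_distrib]
    exact Finset.sum_congr rfl fun j _ => by ring
  constructor
  · constructor
    · rintro ⟨a, k, hk⟩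
      rw [hSneg]
      rw [← (repr_iff (Finset.Icc 1 n \ J) _), hset]
      refine ⟨fun t => if t = n then -k else a t, ?_⟩
      have hbeta : (fun t => if t = n then -k else a t) n = -k := by simp
      rw [Finset.sum_insert hnT0, hbeta]
      have : ∑ t ∈ T0, (t : ℤ) * (if t = n then -k else a t)
          = ∑ t ∈ T0, (t : ℤ) * a t := by
        refine Finset.sum_congr rfl fun t ht => ?_
        have htne : t ≠ n := by rintro rfl; exact hnT0 ht
        rw [if_neg htne]
      rw [this]
      linarith [hk]
    · intro h
      rw [hSneg, ← (repr_iff (Finset.Icc 1 n \ J) _), hset] at h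
      obtain ⟨a, ha⟩ := h
      rw [Finset.sum_insert hnT0] at ha
      refine ⟨a, -(a n), ?_⟩
      linarith [ha]
  · intro r
    have hJn : J ⊆ Finset.Icc 1 n := hJ.trans (Finset.Icc_subset_Icc_right (by omega))
    have hunion : J ∪ (Finset.Icc 1 n \ J) = Finset.Icc 1 n :=
      Finset.union_sdiff_of_subset hJn
    have h1 : Nat.gcd (J.gcd id) g = 1 := by
      have : (Finset.Icc 1 n).gcd id ∣ 1 := by
        have h1mem : (1 : ℕ) ∈ Finset.Icc 1 n := Finset.mem_Icc.mpr ⟨le_refl _, by omega⟩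
        exact Finset.gcd_dvd (f := id) h1mem
      have hu : (Finset.Icc 1 n).gcd id = gcd (J.gcd id) g := by
        rw [← hunion, Finset.gcd_union, hg]
      rw [hu] at this
      exact Nat.dvd_one.mp this
    set gJ : ℕ := J.gcd id with hgJ
    have hbez : (1 : ℤ) = (gJ : ℤ) * Int.gcdA gJ g + (g : ℤ) * Int.gcdB gJ g := by
      have := Int.gcd_eq_gcd_ab (gJ : ℤ) (g : ℤ)
      rw [Int.gcd_natCast_natCast, h1] at this
      exact_mod_cast this
    set u := Int.gcdA gJ g
    set v := Int.gcdB gJ g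
    obtain ⟨c', hc'⟩ := (repr_iff J ((gJ : ℤ) * (u * r))).mpr ⟨u * r, rfl⟩
    refine ⟨c', ⟨-(v * r), ?_⟩⟩
    rw [← hc']
    have : (gJ : ℤ) * u = 1 - (g : ℤ) * v := by linarith [hbez]
    calc (gJ : ℤ) * (u * r) - r = ((gJ : ℤ) * u) * r - r := by ring
      _ = (1 - (g : ℤ) * v) * r - r := by rw [this]
      _ = (g : ℤ) * -(v * r) := by ring
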